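/- Let c ∈ ℂ, let a_0 < a_1 < ⋯ < a_r be natural numbers, and let f_0, …, f_r ∈ ℂ[X] be polynomials such that (X − c)^{a_j} divides f_j for each j. Then (X − c)^{N} divides the Wronskian of f_0, …, f_r, where N = ∑_{j=0}^{r} (a_j − j). -/

import Mathlib

open Polynomial

lemma deriv_dvd (c : ℂ) (n : ℕ) (f : Polynomial ℂ) (h : (X - C c) ^ n ∣ f) :
    (X - C c) ^ (n - 1) ∣ derivative f := by
  obtain ⟨g, rfl⟩ := h
  rw [derivative_mul]
  apply dvd_add
  · apply Dvd.dvd.mul_right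
    rw [derivative_pow]
    exact Dvd.dvd.mul_right (Dvd.dvd.mul_left dvd_rfl _) _
  · exact (pow_dvd_pow _ (Nat.sub_le n 1)).mul_right _

lemma iter_deriv_dvd (c : ℂ) (k : ℕ) (n : ℕ) (f : Polynomial ℂ) (h : (X - C c) ^ n ∣ f) :
    (X - C c) ^ (n - k) ∣ derivative^[k] f := by
  induction k generalizing n f with
  | zero => simpa using h
  | succ k ih =>
    rw [Function.iterate_succ_apply]
    have := ih (n - 1) (derivative f) (deriv_dvd c n f h)
    rwa [Nat.sub_sub, Nat.add_comm] at this

lemma fin_le_apply {r : ℕ} (a : Fin (r + 1) → ℕ) (ha : StrictMono a) (j : Fin (r + 1)) :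
    (j : ℕ) ≤ a j := by
  induction j using Fin.induction with
  | zero => exact Nat.zero_le _
  | succ i ih =>
    have : a i.castSucc < a i.succ := ha Fin.castSucc_lt_succ
    simp only [Fin.val_succ, Fin.coe_castSucc] at ih ⊢
    omega

/-- The Wronskian of f_0, …, f_r: determinant of the matrix whose (i,j) entry is
the i-th formal derivative of f_j. -/
noncomputable def wronskian {r : ℕ} (f : Fin (r + 1) → Polynomial ℂ) : Polynomial ℂ :=
  Matrix.det (fun i j : Fin (r + 1) => derivative^[(i : ℕ)] (f j))

/-- If a_0 < a_1 < ⋯ < a_r are naturals and (X − c)^{a_j} divides f_j for each j,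
then (X − c)^N divides the Wronskian of f_0, …, f_r, where N = ∑_j (a_j − j). -/
theorem pow_sub_dvd_wronskian (r : ℕ) (c : ℂ) (a : Fin (r + 1) → ℕ)
    (ha : StrictMono a) (f : Fin (r + 1) → Polynomial ℂ)
    (hdvd : ∀ j : Fin (r + 1), (X - C c) ^ (a j) ∣ f j) :
    (X - C c) ^ (∑ j : Fin (r + 1), (a j - (j : ℕ))) ∣ wronskian f := by
  unfold _root_.wronskian
  change _ ∣ Matrix.det (Matrix.of fun i j : Fin (r + 1) => derivative^[(i : ℕ)] (f j))
  rw [Matrix.det_apply]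
  apply Finset.dvd_sum
  intro σ _
  apply dvd_smul_of_dvd
  have h1 : (X - C c) ^ (∑ i : Fin (r + 1), (a i - (σ i : ℕ))) ∣
      ∏ i : Fin (r + 1), derivative^[(σ i : ℕ)] (f i) := by
    rw [← Finset.prod_pow_eq_pow_sum]
    exact Finset.prod_dvd_prod_of_dvd _ _ fun i _ => iter_deriv_dvd c _ _ _ (hdvd i)
  refine dvd_trans (pow_dvd_pow _ ?_) h1
  have hsum : ∑ j : Fin (r + 1), (a j - (j : ℕ)) =
      (∑ j : Fin (r + 1), a j) - ∑ j : Fin (r + 1), (j : ℕ) :=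
    Finset.sum_tsub_distrib _ fun j _ => fin_le_apply a ha j
  rw [hsum, tsub_le_iff_right]
  have h2 : ∑ j : Fin (r + 1), (j : ℕ) = ∑ i : Fin (r + 1), (σ i : ℕ) :=
    (Equiv.sum_comp σ fun j => (j : ℕ)).symm
  rw [h2, ← Finset.sum_add_distrib]
  exact Finset.sum_le_sum fun i _ => le_tsub_add.trans le_rfl
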